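/- arXiv:1903.08720 — 6 statements merged into one kernel-verified Lean document; each statement's English description precedes it below -/
import Mathlib

section
/- Let A be a real m×n matrix, s ∈ ℝⁿ, y, σ ∈ ℝᵐ, γ ∈ ℝⁿ. Set ρ = y − A s and τ = γ − Aᵀσ, and assume σᵀρ ≠ 0. Define the adjoint TR1 update A⁺ = A + (1/(σᵀρ)) ρ τᵀ. Then the one-step forward-secant residual satisfies the exact identity y − A⁺ s = (1 − τᵀs/(σᵀρ)) ρ, and consequently ‖y − A⁺ s‖ = (|σᵀy − γᵀs| / |σᵀρ|) · ‖ρ‖. -/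
open scoped RealInnerProductSpace Matrix

/-- Multiplication of a matrix with a vector, as a map between Euclidean spaces. -/
noncomputable def matVec {m n : ℕ} (A : Matrix (Fin m) (Fin n) ℝ)
    (v : EuclideanSpace ℝ (Fin n)) : EuclideanSpace ℝ (Fin m) :=
  Matrix.toEuclideanLin A v

/-- Outer product `u vᵀ` of two Euclidean vectors, as a matrix. -/
def outer {m n : ℕ} (u : EuclideanSpace ℝ (Fin m)) (v : EuclideanSpace ℝ (Fin n)) :
    Matrix (Fin m) (Fin n) ℝ :=
  Matrix.of fun i j => u i * v j

lemma matVec_apply {m n : ℕ} (A : Matrix (Fin m) (Fin n) ℝ) (v : EuclideanSpace ℝ (Fin n)) (i : Fin m) :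
    matVec A v i = ∑ j, A i j * v j := by
  show (A.mulVec (id v)) i = _
  simp [Matrix.mulVec, dotProduct]

lemma inner_eq {k : ℕ} (u v : EuclideanSpace ℝ (Fin k)) : ⟪u, v⟫ = ∑ j, u j * v j := by
  simp [PiLp.inner_apply, RCLike.inner_apply, mul_comm]

lemma matVec_add {m n : ℕ} (A B : Matrix (Fin m) (Fin n) ℝ) (v : EuclideanSpace ℝ (Fin n)) :
    matVec (A + B) v = matVec A v + matVec B v := by
  ext i
  simp [matVec_apply, add_mul, Finset.sum_add_distrib]

lemma matVec_smul {m n : ℕ} (c : ℝ) (A : Matrix (Fin m) (Fin n) ℝ) (v : EuclideanSpace ℝ (Fin n)) :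
    matVec (c • A) v = c • matVec A v := by
  ext i
  simp [matVec_apply, Finset.mul_sum, mul_assoc]

lemma matVec_outer {m n : ℕ} (u : EuclideanSpace ℝ (Fin m)) (v : EuclideanSpace ℝ (Fin n))
    (s : EuclideanSpace ℝ (Fin n)) : matVec (outer u v) s = ⟪v, s⟫ • u := by
  ext i
  simp [matVec_apply, outer, inner_eq, Finset.sum_mul, Finset.mul_sum]
  exact Finset.sum_congr rfl fun j _ => by ring

lemma inner_matVec {m n : ℕ} (A : Matrix (Fin m) (Fin n) ℝ) (σ : EuclideanSpace ℝ (Fin m))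
    (s : EuclideanSpace ℝ (Fin n)) : ⟪σ, matVec A s⟫ = ⟪matVec Aᵀ σ, s⟫ := by
  simp only [inner_eq, matVec_apply, Finset.mul_sum, Finset.sum_mul]
  rw [Finset.sum_comm]
  apply Finset.sum_congr rfl; intro j _
  apply Finset.sum_congr rfl; intro i _
  simp [Matrix.transpose_apply]; ring

/-- exact identity for the one-step forward-secant residual of the
adjoint TR1 update, and the resulting norm identity. -/
theorem tr1_adjoint_forward_residual {m n : ℕ}
    (A : Matrix (Fin m) (Fin n) ℝ)
    (s : EuclideanSpace ℝ (Fin n)) (y σ : EuclideanSpace ℝ (Fin m))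
    (γ : EuclideanSpace ℝ (Fin n))
    (ρ : EuclideanSpace ℝ (Fin m)) (hρ : ρ = y - matVec A s)
    (τ : EuclideanSpace ℝ (Fin n)) (hτ : τ = γ - matVec Aᵀ σ)
    (hne : ⟪σ, ρ⟫ ≠ 0)
    (Aplus : Matrix (Fin m) (Fin n) ℝ)
    (hA : Aplus = A + (1 / ⟪σ, ρ⟫) • outer ρ τ) :
    y - matVec Aplus s = (1 - ⟪τ, s⟫ / ⟪σ, ρ⟫) • ρ ∧
      ‖y - matVec Aplus s‖ = (|⟪σ, y⟫ - ⟪γ, s⟫| / |⟪σ, ρ⟫|) * ‖ρ‖ := by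
  have hmain : y - matVec Aplus s = (1 - ⟪τ, s⟫ / ⟪σ, ρ⟫) • ρ := by
    rw [hA, matVec_add, matVec_smul, matVec_outer]
    have : y - matVec A s = ρ := hρ.symm
    rw [smul_smul, sub_smul, one_smul]
    rw [sub_add_eq_sub_sub, this]
    congr 1
    rw [div_eq_mul_inv, mul_comm, ← div_eq_mul_inv, one_div, div_eq_mul_inv]
  refine ⟨hmain, ?_⟩
  have hkey : ⟪σ, ρ⟫ - ⟪τ, s⟫ = ⟪σ, y⟫ - ⟪γ, s⟫ := by
    rw [hρ, hτ, inner_sub_right, inner_sub_left, inner_matVec]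
    ring
  rw [hmain, norm_smul, Real.norm_eq_abs]
  congr 1
  rw [sub_div' hne]
  rw [abs_div, one_mul, hkey]
end

section
/- (Lemma 2, spectrum equality of Newton-type iteration matrices.) Let H and W be symmetric real n×n matrices, let B and B̃ be real m×n matrices, let P be a real p×n matrix of full row rank p, and let N ∈ ℝ^{n×(n−p)} have orthonormal columns (NᵀN = I) spanning the null space of P (P N = 0). Assume (B̃ − B) N = 0. Define the (n+m+p)×(n+m+p) block matrices K̃ = [[H, B̃ᵀ, Pᵀ],[B̃, 0, 0],[P, 0, 0]], K_GN = [[H, Bᵀ, Pᵀ],[B, 0, 0],[P, 0, 0]], and K = [[W, Bᵀ, Pᵀ],[B, 0, 0],[P, 0, 0]], and assume K̃ and K_GN are invertible. Then the sets of complex eigenvalues of the two iteration matrices coincide: σ(K̃⁻¹K − I) = σ(K_GN⁻¹K − I), where σ denotes the spectrum over ℂ of (the complexification of) a real matrix. -/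
open scoped Matrix

open Matrix

section Aux

variable {R : Type*}

/-- fromRows distributes over smul. -/
lemma aux_fromRows_smul [CommRing R] {m₁ m₂ n : Type*} (c : R)
    (A : Matrix m₁ n R) (B : Matrix m₂ n R) :
    c • Matrix.fromRows A B = Matrix.fromRows (c • A) (c • B) := by
  ext (i | i) j <;> simp

lemma aux_fromRows_sub [CommRing R] {m₁ m₂ n : Type*}
    (A A' : Matrix m₁ n R) (B B' : Matrix m₂ n R) :
    Matrix.fromRows A B - Matrix.fromRows A' B' = Matrix.fromRows (A - A') (B - B') := by
  ext (i | i) j <;> simp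

lemma aux_fromColumns_smul [CommRing R] {m n₁ n₂ : Type*} (c : R)
    (A : Matrix m n₁ R) (B : Matrix m n₂ R) :
    c • Matrix.fromCols A B = Matrix.fromCols (c • A) (c • B) := by
  ext i (j | j) <;> simp

lemma aux_fromColumns_sub [CommRing R] {m n₁ n₂ : Type*}
    (A A' : Matrix m n₁ R) (B B' : Matrix m n₂ R) :
    Matrix.fromCols A B - Matrix.fromCols A' B' =
      Matrix.fromCols (A - A') (B - B') := by
  ext i (j | j) <;> simp

lemma aux_fromBlocks_sub [CommRing R] {m₁ m₂ n₁ n₂ : Type*}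
    (A A' : Matrix m₁ n₁ R) (B B' : Matrix m₁ n₂ R) (C C' : Matrix m₂ n₁ R)
    (D D' : Matrix m₂ n₂ R) :
    Matrix.fromBlocks A B C D - Matrix.fromBlocks A' B' C' D' =
      Matrix.fromBlocks (A - A') (B - B') (C - C') (D - D') := by
  ext (i | i) (j | j) <;> simp

lemma aux_fromRows_map {S : Type*} [CommRing R] [CommRing S] {m₁ m₂ n : Type*} (f : R →+* S)
    (A : Matrix m₁ n R) (B : Matrix m₂ n R) :
    (Matrix.fromRows A B).map f = Matrix.fromRows (A.map f) (B.map f) := by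
  ext (i | i) j <;> simp

lemma aux_fromColumns_map {S : Type*} [CommRing R] [CommRing S] {m n₁ n₂ : Type*} (f : R →+* S)
    (A : Matrix m n₁ R) (B : Matrix m n₂ R) :
    (Matrix.fromCols A B).map f = Matrix.fromCols (A.map f) (B.map f) := by
  ext i (j | j) <;> simp

/-- The projection identity: if `P` has full row rank and `N` has orthonormal columns
spanning the null space of `P`, then `Pᵀ (P Pᵀ)⁻¹ P + N Nᵀ = 1`. -/
lemma aux_proj {n p : ℕ} (P : Matrix (Fin p) (Fin n) ℝ) (hP : P.rank = p)
    (N : Matrix (Fin n) (Fin (n - p)) ℝ) (hN : Nᵀ * N = 1) (hPN : P * N = 0) :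
    Pᵀ * (P * Pᵀ)⁻¹ * P + N * Nᵀ = 1 := by
  classical
  have hple : p ≤ n := by
    have := P.rank_le_card_width
    simpa [hP] using this
  -- P * Pᵀ is invertible
  have hPPt : IsUnit (P * Pᵀ) := by
    rw [← Matrix.mulVec_injective_iff_isUnit]
    have hrank : (P * Pᵀ).rank = p := by rw [Matrix.rank_self_mul_transpose, hP]
    have hsurj : LinearMap.range (P * Pᵀ).mulVecLin = ⊤ := by
      apply Submodule.eq_top_of_finrank_eq
      rw [show Module.finrank ℝ (LinearMap.range (P * Pᵀ).mulVecLin) = (P * Pᵀ).rank from rfl,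
        hrank, Module.finrank_fintype_fun_eq_card, Fintype.card_fin]
    have hinj : Function.Injective (P * Pᵀ).mulVecLin :=
      (LinearMap.injective_iff_surjective).mpr (LinearMap.range_eq_top.mp hsurj)
    exact hinj
  have hPPtdet : IsUnit (P * Pᵀ).det := (Matrix.isUnit_iff_isUnit_det _).mp hPPt
  have hinv : (P * Pᵀ) * (P * Pᵀ)⁻¹ = 1 := Matrix.mul_nonsing_inv _ hPPtdet
  -- range of N = ker of P (as linear maps)
  have hNinj : Function.Injective N.mulVecLin := by
    intro v w hvw
    have : (Nᵀ * N) *ᵥ v = (Nᵀ * N) *ᵥ w := by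
      rw [← Matrix.mulVec_mulVec, ← Matrix.mulVec_mulVec]
      change Nᵀ *ᵥ (N.mulVecLin v) = Nᵀ *ᵥ (N.mulVecLin w)
      rw [hvw]
    simpa [hN] using this
  have hle : LinearMap.range N.mulVecLin ≤ LinearMap.ker P.mulVecLin := by
    rintro x ⟨v, rfl⟩
    simp only [LinearMap.mem_ker, Matrix.mulVecLin_apply, Matrix.mulVec_mulVec, hPN]
    simp
  have hkerrank : Module.finrank ℝ (LinearMap.ker P.mulVecLin) = n - p := by
    have h := LinearMap.finrank_range_add_finrank_ker P.mulVecLin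
    rw [show Module.finrank ℝ (LinearMap.range P.mulVecLin) = P.rank from rfl, hP] at h
    rw [Module.finrank_fintype_fun_eq_card, Fintype.card_fin] at h
    omega
  have hranrank : Module.finrank ℝ (LinearMap.range N.mulVecLin) = n - p := by
    rw [LinearMap.finrank_range_of_inj hNinj, Module.finrank_fintype_fun_eq_card,
      Fintype.card_fin]
  have hrangeq : LinearMap.range N.mulVecLin = LinearMap.ker P.mulVecLin :=
    Submodule.eq_of_le_of_finrank_le hle (by rw [hkerrank, hranrank])
  -- the projection matrix fixes everything
  set Q := Pᵀ * (P * Pᵀ)⁻¹ * P + N * Nᵀ with hQ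
  have hQPt : Q * Pᵀ = Pᵀ := by
    have h1 : Nᵀ * Pᵀ = 0 := by
      rw [← Matrix.transpose_mul, hPN, Matrix.transpose_zero]
    calc Q * Pᵀ = Pᵀ * ((P * Pᵀ)⁻¹ * (P * Pᵀ)) + N * (Nᵀ * Pᵀ) := by
          rw [hQ]; simp only [Matrix.add_mul, Matrix.mul_assoc]
      _ = Pᵀ := by rw [Matrix.nonsing_inv_mul _ hPPtdet, h1, Matrix.mul_one,
          Matrix.mul_zero, add_zero]
  have hQN : Q * N = N := by
    calc Q * N = Pᵀ * ((P * Pᵀ)⁻¹ * (P * N)) + N * (Nᵀ * N) := by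
          rw [hQ]; simp only [Matrix.add_mul, Matrix.mul_assoc]
      _ = N := by rw [hPN, hN]; simp
  -- Q fixes every vector
  have hfix : ∀ x : Fin n → ℝ, Q *ᵥ x = x := by
    intro x
    set u := (P * Pᵀ)⁻¹ *ᵥ (P *ᵥ x) with hu
    set y := x - Pᵀ *ᵥ u with hy
    have hyker : y ∈ LinearMap.ker P.mulVecLin := by
      simp only [LinearMap.mem_ker, Matrix.mulVecLin_apply, hy, Matrix.mulVec_sub]
      rw [hu, Matrix.mulVec_mulVec, Matrix.mulVec_mulVec, hinv, Matrix.one_mulVec, sub_self]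
    obtain ⟨w, hw⟩ : y ∈ LinearMap.range N.mulVecLin := hrangeq ▸ hyker
    have hxeq : x = Pᵀ *ᵥ u + y := by rw [hy]; ring_nf
    rw [hxeq, Matrix.mulVec_add, ← hw]
    have e1 : Q *ᵥ (Pᵀ *ᵥ u) = Pᵀ *ᵥ u := by
      rw [Matrix.mulVec_mulVec, hQPt]
    have e2 : Q *ᵥ (N.mulVecLin w) = N.mulVecLin w := by
      simp only [Matrix.mulVecLin_apply]
      rw [Matrix.mulVec_mulVec, hQN]
    rw [e1, e2]
  -- conclude matrix equality
  ext i j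
  have := congrFun (hfix (Pi.single j 1)) i
  rw [Matrix.mulVec_single_one] at this
  simpa [Matrix.one_apply, Pi.single_apply, eq_comm] using this

/-- Existence of `C` with `Bt - B = C * P`. -/
lemma aux_exists_C {n m p : ℕ} (B Bt : Matrix (Fin m) (Fin n) ℝ)
    (P : Matrix (Fin p) (Fin n) ℝ) (hP : P.rank = p)
    (N : Matrix (Fin n) (Fin (n - p)) ℝ) (hN : Nᵀ * N = 1) (hPN : P * N = 0)
    (hBN : (Bt - B) * N = 0) :
    ∃ C : Matrix (Fin m) (Fin p) ℝ, Bt - B = C * P := by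
  refine ⟨(Bt - B) * Pᵀ * (P * Pᵀ)⁻¹, ?_⟩
  have h := aux_proj P hP N hN hPN
  calc Bt - B = (Bt - B) * (Pᵀ * (P * Pᵀ)⁻¹ * P + N * Nᵀ) := by rw [h, Matrix.mul_one]
    _ = (Bt - B) * Pᵀ * (P * Pᵀ)⁻¹ * P + ((Bt - B) * N) * Nᵀ := by
          simp only [Matrix.mul_add, Matrix.mul_assoc]
    _ = (Bt - B) * Pᵀ * (P * Pᵀ)⁻¹ * P := by rw [hBN, Matrix.zero_mul, add_zero]

/-- The key determinant identity over ℂ. -/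
lemma aux_key_det {n m p : ℕ} (Hc Wc : Matrix (Fin n) (Fin n) ℂ)
    (Bc Btc : Matrix (Fin m) (Fin n) ℂ) (Pc : Matrix (Fin p) (Fin n) ℂ)
    (Cc : Matrix (Fin m) (Fin p) ℂ) (hC : Btc - Bc = Cc * Pc) (z : ℂ) :
    (z • Matrix.fromBlocks Hc (Matrix.fromCols Btcᵀ Pcᵀ) (Matrix.fromRows Btc Pc) 0
      - Matrix.fromBlocks Wc (Matrix.fromCols Bcᵀ Pcᵀ) (Matrix.fromRows Bc Pc) 0).det =
    (z • Matrix.fromBlocks Hc (Matrix.fromCols Bcᵀ Pcᵀ) (Matrix.fromRows Bc Pc) 0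
      - Matrix.fromBlocks Wc (Matrix.fromCols Bcᵀ Pcᵀ) (Matrix.fromRows Bc Pc) 0).det := by
  classical
  have hBt : Btc = Bc + Cc * Pc := by rw [← hC, add_sub_cancel]
  by_cases hz : z = 1
  · subst hz
    rcases isEmpty_or_nonempty (Fin p) with hp | hp
    · have : Cc * Pc = 0 := by
        ext i j
        simp [Matrix.mul_apply]
      rw [hBt, this, add_zero]
    · obtain ⟨i⟩ := hp
      rw [Matrix.det_eq_zero_of_row_eq_zero (Sum.inr (Sum.inr i)) (by
          rintro (j | j | j) <;> simp),
        Matrix.det_eq_zero_of_row_eq_zero (Sum.inr (Sum.inr i)) (by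
          rintro (j | j | j) <;> simp)]
  · set c := z / (z - 1) with hc
    have hz1 : z - 1 ≠ 0 := sub_ne_zero.mpr hz
    have hcz : (z - 1) * c = z := by rw [hc]; field_simp
    set F : Matrix (Fin m ⊕ Fin p) (Fin m ⊕ Fin p) ℂ :=
      Matrix.fromBlocks 1 (c • Cc) 0 1 with hF
    set E : Matrix (Fin n ⊕ (Fin m ⊕ Fin p)) (Fin n ⊕ (Fin m ⊕ Fin p)) ℂ :=
      Matrix.fromBlocks 1 0 0 F with hE
    have hEt : Eᵀ = Matrix.fromBlocks 1 0 0 Fᵀ := by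
      rw [hE]; simp [Matrix.fromBlocks_transpose]
    have hRHS : z • Matrix.fromBlocks Hc (Matrix.fromCols Bcᵀ Pcᵀ)
        (Matrix.fromRows Bc Pc) 0
        - Matrix.fromBlocks Wc (Matrix.fromCols Bcᵀ Pcᵀ) (Matrix.fromRows Bc Pc) 0 =
        Matrix.fromBlocks (z • Hc - Wc) ((z - 1) • Matrix.fromCols Bcᵀ Pcᵀ)
          ((z - 1) • Matrix.fromRows Bc Pc) 0 := by
      simp only [Matrix.fromBlocks_smul, aux_fromBlocks_sub, aux_fromColumns_smul,
        aux_fromColumns_sub, aux_fromRows_smul, aux_fromRows_sub, smul_zero, sub_zero,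
        sub_smul, one_smul]
    have hLHS : z • Matrix.fromBlocks Hc (Matrix.fromCols Btcᵀ Pcᵀ)
        (Matrix.fromRows Btc Pc) 0
        - Matrix.fromBlocks Wc (Matrix.fromCols Bcᵀ Pcᵀ) (Matrix.fromRows Bc Pc) 0 =
        Matrix.fromBlocks (z • Hc - Wc)
          (Matrix.fromCols (z • Btcᵀ - Bcᵀ) ((z - 1) • Pcᵀ))
          (Matrix.fromRows (z • Btc - Bc) ((z - 1) • Pc)) 0 := by
      simp only [Matrix.fromBlocks_smul, aux_fromBlocks_sub, aux_fromColumns_smul,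
        aux_fromColumns_sub, aux_fromRows_smul, aux_fromRows_sub, smul_zero, sub_zero,
        sub_smul, one_smul]
    have hb1 : (z - 1) • (Bc + c • (Cc * Pc)) = z • Btc - Bc := by
      ext i j
      simp only [Matrix.smul_apply, Matrix.add_apply, Matrix.sub_apply, smul_eq_mul, hBt]
      linear_combination ((Cc * Pc) i j) * hcz
    have hBtT : Btcᵀ = Bcᵀ + Pcᵀ * Ccᵀ := by
      rw [hBt, Matrix.transpose_add, Matrix.transpose_mul]
    have hb2 : (z - 1) • (Bcᵀ + c • (Pcᵀ * Ccᵀ)) = z • Btcᵀ - Bcᵀ := by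
      ext i j
      simp only [Matrix.smul_apply, Matrix.add_apply, Matrix.sub_apply, smul_eq_mul, hBtT]
      linear_combination ((Pcᵀ * Ccᵀ) i j) * hcz
    have step3 : F * ((z - 1) • Matrix.fromRows Bc Pc) =
        Matrix.fromRows (z • Btc - Bc) ((z - 1) • Pc) := by
      rw [Matrix.mul_smul, hF, Matrix.fromBlocks_mul_fromRows, Matrix.one_mul,
        Matrix.zero_mul, Matrix.one_mul, zero_add, Matrix.smul_mul, aux_fromRows_smul, hb1]
    have step4 : ((z - 1) • Matrix.fromCols Bcᵀ Pcᵀ) * Fᵀ =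
        Matrix.fromCols (z • Btcᵀ - Bcᵀ) ((z - 1) • Pcᵀ) := by
      rw [Matrix.smul_mul, hF, Matrix.fromBlocks_transpose, Matrix.transpose_smul,
        Matrix.fromCols_mul_fromBlocks]
      simp only [Matrix.transpose_one, Matrix.transpose_zero, Matrix.mul_one,
        Matrix.mul_zero, zero_add, Matrix.mul_smul]
      rw [aux_fromColumns_smul, hb2]
    have hmain : Matrix.fromBlocks (z • Hc - Wc)
          (Matrix.fromCols (z • Btcᵀ - Bcᵀ) ((z - 1) • Pcᵀ))
          (Matrix.fromRows (z • Btc - Bc) ((z - 1) • Pc)) 0 =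
        E * (Matrix.fromBlocks (z • Hc - Wc) ((z - 1) • Matrix.fromCols Bcᵀ Pcᵀ)
          ((z - 1) • Matrix.fromRows Bc Pc) 0) * Eᵀ := by
      rw [hEt]
      conv_rhs => rw [hE]
      rw [Matrix.fromBlocks_multiply, Matrix.fromBlocks_multiply]
      simp only [Matrix.one_mul, Matrix.mul_one, Matrix.zero_mul, Matrix.mul_zero,
        add_zero, zero_add, step3, step4]
    have hdetE : E.det = 1 := by
      simp [hE, hF, Matrix.det_fromBlocks_zero₂₁]
    rw [hLHS, hRHS, hmain, Matrix.det_mul, Matrix.det_mul, Matrix.det_transpose, hdetE,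
      one_mul, mul_one]

end Aux

/-- Lemma 2: the iteration matrices of the block-TR1 based method and of
the exact-Jacobian Gauss-Newton method have the same complex spectrum at the solution. -/
theorem spectrum_iteration_matrix_eq {n m p : ℕ}
    (H W : Matrix (Fin n) (Fin n) ℝ) (hHsymm : H.IsSymm) (hWsymm : W.IsSymm)
    (B Bt : Matrix (Fin m) (Fin n) ℝ)
    (P : Matrix (Fin p) (Fin n) ℝ) (hP : P.rank = p)
    (N : Matrix (Fin n) (Fin (n - p)) ℝ) (hN : Nᵀ * N = 1) (hPN : P * N = 0)
    (hBN : (Bt - B) * N = 0)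
    (Kt Kgn K : Matrix (Fin n ⊕ (Fin m ⊕ Fin p)) (Fin n ⊕ (Fin m ⊕ Fin p)) ℝ)
    (hKt : Kt = Matrix.fromBlocks H (Matrix.fromCols Btᵀ Pᵀ) (Matrix.fromRows Bt P) 0)
    (hKgn : Kgn = Matrix.fromBlocks H (Matrix.fromCols Bᵀ Pᵀ) (Matrix.fromRows B P) 0)
    (hK : K = Matrix.fromBlocks W (Matrix.fromCols Bᵀ Pᵀ) (Matrix.fromRows B P) 0)
    (hKtinv : IsUnit Kt) (hKgninv : IsUnit Kgn) :
    spectrum ℂ ((Kt⁻¹ * K - 1).map (Complex.ofReal ·)) =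
      spectrum ℂ ((Kgn⁻¹ * K - 1).map (Complex.ofReal ·)) := by
  classical
  obtain ⟨C, hC⟩ := aux_exists_C B Bt P hP N hN hPN hBN
  set f : ℝ →+* ℂ := Complex.ofRealHom with hf
  have hmapf : ∀ (M : Matrix (Fin n ⊕ (Fin m ⊕ Fin p)) (Fin n ⊕ (Fin m ⊕ Fin p)) ℝ),
      M.map (Complex.ofReal ·) = M.map f := fun _ => rfl
  -- map of inverse
  have hmapinv : ∀ (M : Matrix (Fin n ⊕ (Fin m ⊕ Fin p)) (Fin n ⊕ (Fin m ⊕ Fin p)) ℝ),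
      IsUnit M → (M⁻¹).map f = (M.map f)⁻¹ := by
    intro M hM
    symm
    apply Matrix.inv_eq_right_inv
    rw [← Matrix.map_mul, Matrix.mul_nonsing_inv _ ((Matrix.isUnit_iff_isUnit_det _).mp hM)]
    simp
  have hmapsub : ∀ (M M' : Matrix (Fin n ⊕ (Fin m ⊕ Fin p)) (Fin n ⊕ (Fin m ⊕ Fin p)) ℝ),
      (M - M').map f = M.map f - M'.map f := by
    intro M M'; ext i j; simp
  have hmapone : ((1 : Matrix (Fin n ⊕ (Fin m ⊕ Fin p)) (Fin n ⊕ (Fin m ⊕ Fin p)) ℝ)).map f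
      = 1 := by
    ext i j; simp [Matrix.one_apply, apply_ite f]
  -- unit determinants over ℂ
  have hdetmap : ∀ (M : Matrix (Fin n ⊕ (Fin m ⊕ Fin p)) (Fin n ⊕ (Fin m ⊕ Fin p)) ℝ),
      IsUnit M → IsUnit (M.map f).det := by
    intro M hM
    rw [show (M.map ⇑f) = f.mapMatrix M from rfl, ← RingHom.map_det]
    have : M.det ≠ 0 := by
      have := (Matrix.isUnit_iff_isUnit_det _).mp hM
      exact this.ne_zero
    simpa [isUnit_iff_ne_zero, hf] using this
  -- spectrum membership characterization
  have hmem : ∀ (Mn : Matrix (Fin n ⊕ (Fin m ⊕ Fin p)) (Fin n ⊕ (Fin m ⊕ Fin p)) ℂ),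
      IsUnit Mn.det → ∀ (Mk : Matrix (Fin n ⊕ (Fin m ⊕ Fin p)) (Fin n ⊕ (Fin m ⊕ Fin p)) ℂ)
      (μ : ℂ), (μ ∈ spectrum ℂ (Mn⁻¹ * Mk - 1) ↔ ((μ + 1) • Mn - Mk).det = 0) := by
    intro Mn hMn Mk μ
    rw [spectrum.mem_iff, Algebra.algebraMap_eq_smul_one]
    have key : μ • (1 : Matrix (Fin n ⊕ (Fin m ⊕ Fin p)) (Fin n ⊕ (Fin m ⊕ Fin p)) ℂ)
        - (Mn⁻¹ * Mk - 1) = Mn⁻¹ * ((μ + 1) • Mn - Mk) := by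
      rw [Matrix.mul_sub, Matrix.mul_smul, Matrix.nonsing_inv_mul _ hMn]
      ext i j
      simp [Matrix.sub_apply, Matrix.smul_apply, Matrix.one_apply, add_smul]
      ring_nf
    rw [key]
    rw [Matrix.isUnit_iff_isUnit_det, Matrix.det_mul]
    have hMninv : (Mn⁻¹).det ≠ 0 := by
      have : (Mn⁻¹).det * Mn.det = 1 := by
        rw [← Matrix.det_mul, Matrix.nonsing_inv_mul _ hMn, Matrix.det_one]
      intro h0
      rw [h0, zero_mul] at this
      exact zero_ne_one this
    simp only [isUnit_iff_ne_zero, ne_eq, not_not, mul_eq_zero]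
    exact or_iff_right hMninv
  -- rewrite the two iteration matrices
  have hKtmap : (Kt⁻¹ * K - 1).map f = (Kt.map f)⁻¹ * (K.map f) - 1 := by
    rw [hmapsub, Matrix.map_mul, hmapinv Kt hKtinv, hmapone]
  have hKgnmap : (Kgn⁻¹ * K - 1).map f = (Kgn.map f)⁻¹ * (K.map f) - 1 := by
    rw [hmapsub, Matrix.map_mul, hmapinv Kgn hKgninv, hmapone]
  -- block forms of the complexified matrices
  have hKtc : Kt.map f = Matrix.fromBlocks (H.map f)
      (Matrix.fromCols ((Bt.map f))ᵀ ((P.map f))ᵀ)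
      (Matrix.fromRows (Bt.map f) (P.map f)) 0 := by
    rw [hKt, Matrix.fromBlocks_map, aux_fromColumns_map, aux_fromRows_map]
    simp [Matrix.transpose_map]
  have hKgnc : Kgn.map f = Matrix.fromBlocks (H.map f)
      (Matrix.fromCols ((B.map f))ᵀ ((P.map f))ᵀ)
      (Matrix.fromRows (B.map f) (P.map f)) 0 := by
    rw [hKgn, Matrix.fromBlocks_map, aux_fromColumns_map, aux_fromRows_map]
    simp [Matrix.transpose_map]
  have hKc : K.map f = Matrix.fromBlocks (W.map f)
      (Matrix.fromCols ((B.map f))ᵀ ((P.map f))ᵀ)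
      (Matrix.fromRows (B.map f) (P.map f)) 0 := by
    rw [hK, Matrix.fromBlocks_map, aux_fromColumns_map, aux_fromRows_map]
    simp [Matrix.transpose_map]
  have hCc : (Bt.map f) - (B.map f) = (C.map f) * (P.map f) := by
    rw [← Matrix.map_mul, ← hC]
    ext i j; simp
  ext μ
  rw [hmapf, hmapf, hKtmap, hKgnmap,
    hmem _ (hdetmap Kt hKtinv) _ μ, hmem _ (hdetmap Kgn hKgninv) _ μ, hKtc, hKgnc, hKc]
  constructor
  · intro h
    rw [← aux_key_det (H.map f) (W.map f) (B.map f) (Bt.map f) (P.map f) (C.map f) hCc (μ + 1)]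
    exact h
  · intro h
    rw [aux_key_det (H.map f) (W.map f) (B.map f) (Bt.map f) (P.map f) (C.map f) hCc (μ + 1)]
    exact h
end

section
/- (Corollary 1, equality of asymptotic linear contraction rates.) Under the hypotheses of the spectrum-equality lemma — H, W symmetric real n×n, B, B̃ ∈ ℝ^{m×n}, P ∈ ℝ^{p×n} of full row rank, N ∈ ℝ^{n×(n−p)} with orthonormal columns and P N = 0, (B̃ − B) N = 0, and K̃ = [[H, B̃ᵀ, Pᵀ],[B̃, 0, 0],[P, 0, 0]], K_GN = [[H, Bᵀ, Pᵀ],[B, 0, 0],[P, 0, 0]], K = [[W, Bᵀ, Pᵀ],[B, 0, 0],[P, 0, 0]] with K̃ and K_GN invertible — the spectral radii of the two iteration matrices are equal: ρ(K̃⁻¹K − I) = ρ(K_GN⁻¹K − I). -/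
open Matrix Polynomial


/-- Factorisation lemma: if `D * N = 0` where the columns of `N` span `ker P`
(ensured by `NᵀN = 1`, `P N = 0`, `rank P = p`), then `D = L * P` for some `L`. -/
lemma exists_factor {n m p : ℕ} (D : Matrix (Fin m) (Fin n) ℝ)
    (P : Matrix (Fin p) (Fin n) ℝ) (hP : P.rank = p)
    (N : Matrix (Fin n) (Fin (n - p)) ℝ) (hN : Nᵀ * N = 1) (hPN : P * N = 0)
    (hDN : D * N = 0) : ∃ L : Matrix (Fin m) (Fin p) ℝ, D = L * P := by
  have hpn : p ≤ n := hP ▸ P.rank_le_width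
  -- N is injective
  have hNinj : Function.Injective N.mulVecLin := by
    intro x y hxy
    have h1 : (Nᵀ * N).mulVec x = (Nᵀ * N).mulVec y := by
      simp only [← Matrix.mulVec_mulVec]
      simp only [Matrix.mulVecLin_apply] at hxy
      rw [hxy]
    simpa [hN] using h1
  have hrangeN : Module.finrank ℝ (LinearMap.range N.mulVecLin) = n - p := by
    rw [LinearMap.finrank_range_of_inj hNinj]
    simp
  have hP_range : Module.finrank ℝ (LinearMap.range P.mulVecLin) = p := hP
  have hkerP : Module.finrank ℝ (LinearMap.ker P.mulVecLin) = n - p := by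
    have h1 := LinearMap.finrank_range_add_finrank_ker P.mulVecLin
    rw [hP_range] at h1
    rw [Module.finrank_pi] at h1
    simp at h1
    omega
  -- range N = ker P
  have hle : LinearMap.range N.mulVecLin ≤ LinearMap.ker P.mulVecLin := by
    rintro x ⟨y, rfl⟩
    have h0 : (P * N) *ᵥ y = 0 := by rw [hPN]; simp
    simpa [Matrix.mulVecLin_apply, Matrix.mulVec_mulVec] using h0
  have heq : LinearMap.range N.mulVecLin = LinearMap.ker P.mulVecLin :=
    Submodule.eq_of_le_of_finrank_le hle (by rw [hrangeN, hkerP])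
  -- ker P ⊆ ker D
  have hkerD : ∀ v, P.mulVec v = 0 → D.mulVec v = 0 := by
    intro v hv
    have : v ∈ LinearMap.range N.mulVecLin := by
      rw [heq]; exact hv
    obtain ⟨y, rfl⟩ := this
    have h0 : (D * N) *ᵥ y = 0 := by rw [hDN]; simp
    simpa [Matrix.mulVecLin_apply, Matrix.mulVec_mulVec] using h0
  -- P is surjective
  have hsurj : LinearMap.range P.mulVecLin = ⊤ := by
    apply Submodule.eq_top_of_finrank_eq
    rw [hP_range]
    simp
  obtain ⟨g, hg⟩ := P.mulVecLin.exists_rightInverse_of_surjective hsurj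
  set L := LinearMap.toMatrix' (D.mulVecLin ∘ₗ g) with hL
  have hLmv : L.mulVecLin = D.mulVecLin ∘ₗ g := by
    rw [hL, ← Matrix.toLin'_apply', Matrix.toLin'_toMatrix']
  refine ⟨L, ?_⟩
  apply Matrix.toLin'.injective
  apply LinearMap.ext
  intro v
  rw [Matrix.toLin'_apply, Matrix.toLin'_apply, ← Matrix.mulVec_mulVec]
  have h1 : L *ᵥ (P *ᵥ v) = D *ᵥ g (P *ᵥ v) := by
    have := congrFun (congrArg (fun (f : (Fin p → ℝ) →ₗ[ℝ] (Fin m → ℝ)) => f (P *ᵥ v)) hLmv) 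
    simpa [Matrix.mulVecLin_apply] using congrArg (fun (f : (Fin p → ℝ) →ₗ[ℝ] (Fin m → ℝ)) => f (P *ᵥ v)) hLmv
  rw [h1]
  have h2 : P *ᵥ (g (P *ᵥ v) - v) = 0 := by
    have : P.mulVecLin (g (P *ᵥ v)) = P *ᵥ v := by
      have := congrArg (fun (f : (Fin p → ℝ) →ₗ[ℝ] (Fin p → ℝ)) => f (P *ᵥ v)) hg
      simpa using this
    simp only [Matrix.mulVec_sub]
    simp only [Matrix.mulVecLin_apply] at this
    rw [this]
    simp
  have h3 := hkerD _ h2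
  rw [Matrix.mulVec_sub] at h3
  exact (sub_eq_zero.mp h3).symm


/-- Block congruence: adding `L` times the `Q`-rows to the `C`-rows (and symmetrically
for columns) does not change the determinant of the KKT-type matrix. -/
lemma key_det {n m p : ℕ} (A : Matrix (Fin n) (Fin n) ℂ) (C : Matrix (Fin m) (Fin n) ℂ)
    (Q : Matrix (Fin p) (Fin n) ℂ) (L : Matrix (Fin m) (Fin p) ℂ) :
    (Matrix.fromBlocks A (Matrix.fromCols (C + L * Q)ᵀ Qᵀ)
        (Matrix.fromRows (C + L * Q) Q) 0).det =
      (Matrix.fromBlocks A (Matrix.fromCols Cᵀ Qᵀ) (Matrix.fromRows C Q) 0).det := by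
  set G22 : Matrix (Fin m ⊕ Fin p) (Fin m ⊕ Fin p) ℂ := Matrix.fromBlocks 1 L 0 1 with hG22
  set G : Matrix (Fin n ⊕ (Fin m ⊕ Fin p)) (Fin n ⊕ (Fin m ⊕ Fin p)) ℂ :=
    Matrix.fromBlocks 1 0 0 G22 with hG
  have hGdet : G.det = 1 := by
    rw [hG, Matrix.det_fromBlocks_zero₂₁, hG22, Matrix.det_fromBlocks_zero₂₁]
    simp
  have hmain : G * (Matrix.fromBlocks A (Matrix.fromCols Cᵀ Qᵀ) (Matrix.fromRows C Q) 0) * Gᵀ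
      = Matrix.fromBlocks A (Matrix.fromCols (C + L * Q)ᵀ Qᵀ)
        (Matrix.fromRows (C + L * Q) Q) 0 := by
    rw [hG, Matrix.fromBlocks_transpose, Matrix.fromBlocks_multiply, Matrix.fromBlocks_multiply]
    rw [hG22, Matrix.fromBlocks_transpose, Matrix.fromBlocks_mul_fromRows]
    simp only [Matrix.transpose_one, Matrix.transpose_zero, Matrix.mul_zero, Matrix.zero_mul,
      Matrix.mul_one, Matrix.one_mul, add_zero, zero_add, Matrix.fromCols_mul_fromBlocks,
      Matrix.transpose_add, Matrix.transpose_mul]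
  rw [← hmain, Matrix.det_mul, Matrix.det_mul, hGdet, Matrix.det_transpose, hGdet]
  ring
lemma pencil_blocks {n m p : ℕ} (μ : ℂ) (H W : Matrix (Fin n) (Fin n) ℂ)
    (Bt B : Matrix (Fin m) (Fin n) ℂ) (P : Matrix (Fin p) (Fin n) ℂ) :
    μ • Matrix.fromBlocks H (Matrix.fromCols Btᵀ Pᵀ) (Matrix.fromRows Bt P) 0
      - Matrix.fromBlocks W (Matrix.fromCols Bᵀ Pᵀ) (Matrix.fromRows B P) 0
    = Matrix.fromBlocks (μ • H - W) (Matrix.fromCols (μ • Bt - B)ᵀ ((μ - 1) • P)ᵀ)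
        (Matrix.fromRows (μ • Bt - B) ((μ - 1) • P)) 0 := by
  ext (i | i | i) (j | j | j) <;>
    simp [Matrix.sub_apply, Matrix.smul_apply, sub_smul, Matrix.fromCols,
      Matrix.fromBlocks, smul_eq_mul]

lemma fromColumns_map {n m p : ℕ} (A : Matrix (Fin n) (Fin m) ℝ) (B : Matrix (Fin n) (Fin p) ℝ)
    (f : ℝ → ℂ) : (Matrix.fromCols A B).map f = Matrix.fromCols (A.map f) (B.map f) := by
  ext i (j | j) <;> simp [Matrix.fromCols, Matrix.map_apply]

lemma fromRows_map {n m p : ℕ} (A : Matrix (Fin m) (Fin n) ℝ) (B : Matrix (Fin p) (Fin n) ℝ)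
    (f : ℝ → ℂ) : (Matrix.fromRows A B).map f = Matrix.fromRows (A.map f) (B.map f) := by
  ext (i | i) j <;> simp [Matrix.map_apply]

open scoped Matrix

/-- Corollary 1: the asymptotic linear contraction rates (spectral radii
of the iteration matrices) of the block-TR1 based method and of the exact-Jacobian
Gauss-Newton method coincide. -/
theorem spectralRadius_iteration_matrix_eq {n m p : ℕ}
    (H W : Matrix (Fin n) (Fin n) ℝ) (hHsymm : H.IsSymm) (hWsymm : W.IsSymm)
    (B Bt : Matrix (Fin m) (Fin n) ℝ)
    (P : Matrix (Fin p) (Fin n) ℝ) (hP : P.rank = p)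
    (N : Matrix (Fin n) (Fin (n - p)) ℝ) (hN : Nᵀ * N = 1) (hPN : P * N = 0)
    (hBN : (Bt - B) * N = 0)
    (Kt Kgn K : Matrix (Fin n ⊕ (Fin m ⊕ Fin p)) (Fin n ⊕ (Fin m ⊕ Fin p)) ℝ)
    (hKt : Kt = Matrix.fromBlocks H (Matrix.fromCols Btᵀ Pᵀ) (Matrix.fromRows Bt P) 0)
    (hKgn : Kgn = Matrix.fromBlocks H (Matrix.fromCols Bᵀ Pᵀ) (Matrix.fromRows B P) 0)
    (hK : K = Matrix.fromBlocks W (Matrix.fromCols Bᵀ Pᵀ) (Matrix.fromRows B P) 0)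
    (hKtinv : IsUnit Kt) (hKgninv : IsUnit Kgn) :
    spectralRadius ℂ ((Kt⁻¹ * K - 1).map (Complex.ofReal ·)) =
      spectralRadius ℂ ((Kgn⁻¹ * K - 1).map (Complex.ofReal ·)) := by
  obtain ⟨L, hL⟩ := exists_factor (Bt - B) P hP N hN hPN hBN
  set f : ℝ →+* ℂ := Complex.ofRealHom with hf
  -- complexifications
  set Hc := H.map f with hHc
  set Wc := W.map f with hWc
  set Bc := B.map f with hBc
  set Btc := Bt.map f with hBtc
  set Pc := P.map f with hPc
  set Lc := L.map f with hLc
  set Ktc := Kt.map f with hKtc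
  set Kgnc := Kgn.map f with hKgnc
  set Kc := K.map f with hKc
  have hLfac : Btc - Bc = Lc * Pc := by
    rw [hBtc, hBc, hLc, hPc, ← Matrix.map_sub (⇑f) (fun a b => map_sub f a b), ← Matrix.map_mul, hL]
  have hKtcb : Ktc = Matrix.fromBlocks Hc (Matrix.fromCols Btcᵀ Pcᵀ)
      (Matrix.fromRows Btc Pc) 0 := by
    rw [hKtc, hKt, Matrix.fromBlocks_map, fromColumns_map, _root_.fromRows_map]
    rw [← Matrix.transpose_map, ← Matrix.transpose_map]
    simp [hHc, hBtc, hPc, Matrix.map_zero f f.map_zero]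
  have hKgncb : Kgnc = Matrix.fromBlocks Hc (Matrix.fromCols Bcᵀ Pcᵀ)
      (Matrix.fromRows Bc Pc) 0 := by
    rw [hKgnc, hKgn, Matrix.fromBlocks_map, fromColumns_map, _root_.fromRows_map]
    rw [← Matrix.transpose_map, ← Matrix.transpose_map]
    simp [hHc, hBc, hPc, Matrix.map_zero f f.map_zero]
  have hKcb : Kc = Matrix.fromBlocks Wc (Matrix.fromCols Bcᵀ Pcᵀ)
      (Matrix.fromRows Bc Pc) 0 := by
    rw [hKc, hK, Matrix.fromBlocks_map, fromColumns_map, _root_.fromRows_map]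
    rw [← Matrix.transpose_map, ← Matrix.transpose_map]
    simp [hWc, hBc, hPc, Matrix.map_zero f f.map_zero]
  -- pencil determinant identity for μ ≠ 1
  have hdet1 : ∀ μ : ℂ, μ ≠ 1 → (μ • Ktc - Kc).det = (μ • Kgnc - Kc).det := by
    intro μ hμ
    rw [hKtcb, hKgncb, hKcb, pencil_blocks, pencil_blocks]
    have hμ1 : μ - 1 ≠ 0 := sub_ne_zero.mpr hμ
    have hCt : μ • Btc - Bc = (μ • Bc - Bc) + (((μ - 1)⁻¹ * μ) • Lc) * ((μ - 1) • Pc) := by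
      have h1 : (((μ - 1)⁻¹ * μ) • Lc) * ((μ - 1) • Pc) = μ • (Lc * Pc) := by
        rw [Matrix.smul_mul, Matrix.mul_smul, smul_smul]
        congr 1
        field_simp
      rw [h1, ← hLfac]
      module
    rw [hCt]
    exact key_det _ _ _ _
  -- extend to all μ by polynomials
  have hdet : ∀ μ : ℂ, (μ • Ktc - Kc).det = (μ • Kgnc - Kc).det := by
    have heval : ∀ (M : Matrix (Fin n ⊕ (Fin m ⊕ Fin p)) (Fin n ⊕ (Fin m ⊕ Fin p)) ℂ) (μ : ℂ),
        (((X : ℂ[X]) • M.map C - Kc.map C).det).eval μ = (μ • M - Kc).det := by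
      intro M μ
      rw [show (((X : ℂ[X]) • M.map C - Kc.map C).det).eval μ
          = (Polynomial.evalRingHom μ) (((X : ℂ[X]) • M.map C - Kc.map C).det) from rfl]
      rw [RingHom.map_det]
      congr 1
      ext i j
      simp only [Polynomial.coe_evalRingHom, RingHom.mapMatrix_apply, Matrix.map_apply, Matrix.sub_apply,
        Matrix.smul_apply, smul_eq_mul, Polynomial.eval_sub, Polynomial.eval_mul,
        Polynomial.eval_X, Polynomial.eval_C]
    have hq : ((X : ℂ[X]) • Ktc.map C - Kc.map C).det
        = ((X : ℂ[X]) • Kgnc.map C - Kc.map C).det := by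
      apply Polynomial.eq_of_infinite_eval_eq
      apply Set.Infinite.mono (s := {x : ℂ | x ≠ 1})
      · intro μ hμ
        simp only [Set.mem_setOf_eq] at hμ ⊢
        rw [heval, heval]
        exact hdet1 μ hμ
      · have h1 : ({x : ℂ | x ≠ 1}) = ({1} : Set ℂ)ᶜ := by
          ext x; simp [Set.mem_compl_iff]
        rw [h1]
        exact (Set.finite_singleton 1).infinite_compl
    intro μ
    rw [← heval Ktc μ, ← heval Kgnc μ, hq]
  -- units
  have hKtdet : IsUnit Kt.det := (Matrix.isUnit_iff_isUnit_det Kt).mp hKtinv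
  have hKgndet : IsUnit Kgn.det := (Matrix.isUnit_iff_isUnit_det Kgn).mp hKgninv
  have hKtcU : IsUnit Ktc.det := by
    rw [hKtc, ← RingHom.mapMatrix_apply, ← RingHom.map_det]; exact hKtdet.map f
  have hKgncU : IsUnit Kgnc.det := by
    rw [hKgnc, ← RingHom.mapMatrix_apply, ← RingHom.map_det]; exact hKgndet.map f
  -- map of iteration matrices
  have hmapinv : ∀ (M : Matrix (Fin n ⊕ (Fin m ⊕ Fin p)) (Fin n ⊕ (Fin m ⊕ Fin p)) ℝ),
      IsUnit M.det → (M⁻¹).map f = (M.map f)⁻¹ := by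
    intro M hM
    refine (Matrix.inv_eq_right_inv ?_).symm
    rw [← Matrix.map_mul, Matrix.mul_nonsing_inv M hM, Matrix.map_one f f.map_zero f.map_one]
  have hMt : (Kt⁻¹ * K - 1).map (Complex.ofReal ·) = Ktc⁻¹ * Kc - 1 := by
    show (Kt⁻¹ * K - 1).map f = _
    rw [Matrix.map_sub (⇑f) (fun a b => map_sub f a b), Matrix.map_mul,
      Matrix.map_one f f.map_zero f.map_one, hmapinv Kt hKtdet]
  have hMgn : (Kgn⁻¹ * K - 1).map (Complex.ofReal ·) = Kgnc⁻¹ * Kc - 1 := by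
    show (Kgn⁻¹ * K - 1).map f = _
    rw [Matrix.map_sub (⇑f) (fun a b => map_sub f a b), Matrix.map_mul,
      Matrix.map_one f f.map_zero f.map_one, hmapinv Kgn hKgndet]
  -- spectrum characterization
  have hspec : ∀ (Q : Matrix (Fin n ⊕ (Fin m ⊕ Fin p)) (Fin n ⊕ (Fin m ⊕ Fin p)) ℂ),
      IsUnit Q.det → spectrum ℂ (Q⁻¹ * Kc - 1) = {z : ℂ | ((z + 1) • Q - Kc).det = 0} := by
    intro Q hQ
    ext z
    rw [spectrum.mem_iff, Algebra.algebraMap_eq_smul_one]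
    have h1 : z • (1 : Matrix (Fin n ⊕ (Fin m ⊕ Fin p)) (Fin n ⊕ (Fin m ⊕ Fin p)) ℂ)
        - (Q⁻¹ * Kc - 1) = Q⁻¹ * ((z + 1) • Q - Kc) := by
      rw [Matrix.mul_sub, Matrix.mul_smul, Matrix.nonsing_inv_mul Q hQ]
      module
    rw [h1, Matrix.isUnit_iff_isUnit_det, Matrix.det_mul, isUnit_iff_ne_zero]
    have hQinv : Q⁻¹.det ≠ 0 := by
      have := Matrix.nonsing_inv_mul Q hQ
      have hd := congrArg Matrix.det this
      rw [Matrix.det_mul, Matrix.det_one] at hd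
      intro h
      rw [h, zero_mul] at hd
      exact zero_ne_one hd
    simp only [Set.mem_setOf_eq, mul_eq_zero, not_or, not_not]
    constructor
    · intro h
      rcases h with h | h
      · exact absurd h hQinv
      · exact h
    · intro h
      exact Or.inr h
  have hseteq : spectrum ℂ (Ktc⁻¹ * Kc - 1) = spectrum ℂ (Kgnc⁻¹ * Kc - 1) := by
    rw [hspec Ktc hKtcU, hspec Kgnc hKgncU]
    ext z
    simp only [Set.mem_setOf_eq]
    rw [hdet (z + 1)]
  rw [hMt, hMgn]
  unfold spectralRadius
  rw [hseteq]
end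

section
/- (Newton-type q-linear convergence under the κ-condition, core of Theorem 1 (iv)–(v).) Let F : ℝᵈ → ℝᵈ be continuously differentiable, let (Jᵏ)ₖ be a sequence of invertible d×d real matrices with ‖Jᵏ‖ ≤ B and ‖(Jᵏ)⁻¹‖ ≤ β for all k, and let the iterates satisfy y^{k+1} = y^k − (Jᵏ)⁻¹F(y^k), with steps Δy^k = y^{k+1} − y^k. Suppose there exists κ < 1 such that for all k and all t ∈ [0,1], ‖(J^{k+1})⁻¹ (Jᵏ − DF(y^k + t Δy^k)) Δy^k‖ ≤ κ ‖Δy^k‖. Then ‖Δy^{k+1}‖ ≤ κ‖Δy^k‖ for all k; consequently the sequence (y^k) converges to a limit y* with ‖y^k − y*‖ ≤ ‖Δy^k‖/(1 − κ), the convergence is q-linear with rate κ, and F(y*) = 0. -/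
open Filter intervalIntegral

lemma ftc_aux {d : ℕ} (F : EuclideanSpace ℝ (Fin d) → EuclideanSpace ℝ (Fin d))
    (hF : ContDiff ℝ 1 F) (x v : EuclideanSpace ℝ (Fin d)) :
    F (x + v) = F x + ∫ t in (0:ℝ)..1, fderiv ℝ F (x + t • v) v := by
  have hcont : Continuous fun t : ℝ => fderiv ℝ F (x + t • v) v :=
    ((hF.continuous_fderiv one_ne_zero).comp (continuous_const.add (continuous_id.smul continuous_const))).clm_apply continuous_const
  have hderiv : ∀ t ∈ Set.uIcc (0:ℝ) 1,
      HasDerivAt (fun s : ℝ => F (x + s • v)) (fderiv ℝ F (x + t • v) v) t := by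
    intro t _
    have h1 : HasDerivAt (fun s : ℝ => x + s • v) v t := by
      simpa using ((hasDerivAt_id t).smul_const v).const_add x
    exact ((hF.differentiable one_ne_zero (x + t • v)).hasFDerivAt).comp_hasDerivAt t h1
  have := intervalIntegral.integral_eq_sub_of_hasDerivAt hderiv
    (hcont.intervalIntegrable 0 1)
  simp only [one_smul, zero_smul, add_zero] at this
  rw [this]; abel

/-- Newton-type q-linear convergence under the κ-condition.  With bounded
invertible approximations `Jᵏ` of the Jacobian and the κ-condition on the iteration,
each step contracts by the factor `κ`, the iterates converge q-linearly with rate `κ`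
to some `y*` with `‖yᵏ − y*‖ ≤ ‖Δyᵏ‖/(1 − κ)`, and the limit is a zero of `F`. -/
theorem newton_type_qlinear_convergence {d : ℕ}
    (F : EuclideanSpace ℝ (Fin d) → EuclideanSpace ℝ (Fin d))
    (hF : ContDiff ℝ 1 F)
    (J : ℕ → (EuclideanSpace ℝ (Fin d) ≃L[ℝ] EuclideanSpace ℝ (Fin d)))
    (B β : ℝ)
    (hB : ∀ k, ‖((J k : EuclideanSpace ℝ (Fin d) →L[ℝ] EuclideanSpace ℝ (Fin d)))‖ ≤ B)
    (hβ : ∀ k, ‖(((J k).symm : EuclideanSpace ℝ (Fin d) →L[ℝ] EuclideanSpace ℝ (Fin d)))‖ ≤ β)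
    (y : ℕ → EuclideanSpace ℝ (Fin d))
    (hrec : ∀ k, y (k + 1) = y k - (J k).symm (F (y k)))
    (Δ : ℕ → EuclideanSpace ℝ (Fin d)) (hΔ : ∀ k, Δ k = y (k + 1) - y k)
    (κ : ℝ) (hκ : κ < 1)
    (hcond : ∀ k, ∀ t ∈ Set.Icc (0 : ℝ) 1,
      ‖(J (k + 1)).symm (J k (Δ k) - fderiv ℝ F (y k + t • Δ k) (Δ k))‖ ≤ κ * ‖Δ k‖) :
    (∀ k, ‖Δ (k + 1)‖ ≤ κ * ‖Δ k‖) ∧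
    ∃ ystar : EuclideanSpace ℝ (Fin d),
      Tendsto y atTop (nhds ystar) ∧
      (∀ k, ‖y k - ystar‖ ≤ ‖Δ k‖ / (1 - κ)) ∧
      F ystar = 0 := by
  have hyk1 : ∀ k, y (k + 1) = y k + Δ k := by
    intro k; rw [hΔ]; abel
  have hJΔ : ∀ k, (J k) (Δ k) = -(F (y k)) := by
    intro k; rw [hΔ, hrec]; simp
  -- the core contraction step
  have hstep : ∀ k, ‖Δ (k + 1)‖ ≤ κ * ‖Δ k‖ := by
    intro k
    set S : EuclideanSpace ℝ (Fin d) →L[ℝ] EuclideanSpace ℝ (Fin d) :=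
      ((J (k+1)).symm : EuclideanSpace ℝ (Fin d) →L[ℝ] EuclideanSpace ℝ (Fin d)) with hS
    set c : EuclideanSpace ℝ (Fin d) := (J k) (Δ k) with hc
    set f : ℝ → EuclideanSpace ℝ (Fin d) :=
      fun t => fderiv ℝ F (y k + t • Δ k) (Δ k) with hf
    have hfcont : Continuous f :=
      ((hF.continuous_fderiv one_ne_zero).comp (continuous_const.add (continuous_id.smul continuous_const))).clm_apply continuous_const
    have hfint : IntervalIntegrable f MeasureTheory.volume 0 1 :=
      hfcont.intervalIntegrable 0 1
    have hsubint : IntervalIntegrable (fun t => c - f t) MeasureTheory.volume 0 1 :=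
      (continuous_const.sub hfcont).intervalIntegrable 0 1
    have key : Δ (k + 1) = ∫ t in (0:ℝ)..1, S (c - f t) := by
      have hF1 : F (y (k + 1)) = F (y k) + ∫ t in (0:ℝ)..1, f t := by
        rw [hyk1 k]; exact ftc_aux F hF (y k) (Δ k)
      have hΔ1 : Δ (k + 1) = -((J (k + 1)).symm (F (y (k + 1)))) := by
        rw [hΔ, hrec]; abel
      have hcomm : (∫ t in (0:ℝ)..1, S (c - f t)) = S (∫ t in (0:ℝ)..1, (c - f t)) :=
        S.intervalIntegral_comp_comm hsubint
      have hci : (∫ t in (0:ℝ)..1, (c - f t)) = c - ∫ t in (0:ℝ)..1, f t := by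
        rw [intervalIntegral.integral_sub (continuous_const.intervalIntegrable 0 1) hfint]
        simp
      rw [hcomm, hci, hΔ1, hF1]
      have heq : F (y k) + (∫ t in (0:ℝ)..1, f t) = -(c - ∫ t in (0:ℝ)..1, f t) := by
        rw [hc, hJΔ k]; abel
      rw [heq, map_neg, neg_neg]
      rfl
    rw [key]
    have hbound : ∀ t ∈ Set.uIoc (0:ℝ) 1, ‖S (c - f t)‖ ≤ κ * ‖Δ k‖ := by
      intro t ht
      rw [Set.uIoc_of_le zero_le_one] at ht
      have := hcond k t ⟨le_of_lt ht.1, ht.2⟩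
      simpa [hS, hc, hf] using this
    have := intervalIntegral.norm_integral_le_of_norm_le_const hbound
    simpa using this
  refine ⟨hstep, ?_⟩
  rcases le_or_gt 0 κ with hκ0 | hκ0
  · -- main case: 0 ≤ κ < 1
    have hgeo : ∀ k n, ‖Δ (k + n)‖ ≤ ‖Δ k‖ * κ ^ n := by
      intro k n
      induction n with
      | zero => simp
      | succ n ih =>
        calc ‖Δ (k + (n+1))‖ = ‖Δ ((k + n) + 1)‖ := by ring_nf
          _ ≤ κ * ‖Δ (k + n)‖ := hstep _
          _ ≤ κ * (‖Δ k‖ * κ ^ n) := by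
              exact mul_le_mul_of_nonneg_left ih hκ0
          _ = ‖Δ k‖ * κ ^ (n + 1) := by ring
    have hdist : ∀ k n, dist (y (k + n)) (y (k + n + 1)) ≤ ‖Δ k‖ * κ ^ n := by
      intro k n
      rw [dist_eq_norm, show y (k+n) - y (k+n+1) = -(Δ (k+n)) from by rw [hΔ]; abel,
        norm_neg]
      exact hgeo k n
    have hcauchy : CauchySeq y := by
      apply cauchySeq_of_le_geometric κ (‖Δ 0‖) hκ
      intro n
      simpa using hdist 0 n
    obtain ⟨ystar, hy⟩ := cauchySeq_tendsto_of_complete hcauchy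
    refine ⟨ystar, hy, ?_, ?_⟩
    · intro k
      have hyshift : Tendsto (fun n => y (k + n)) atTop (nhds ystar) := by
        have := hy.comp (tendsto_add_atTop_nat k)
        simpa [Function.comp_def, add_comm] using this
      have := dist_le_of_le_geometric_of_tendsto₀ κ (‖Δ k‖) hκ
        (fun n => hdist k n) (by simpa using hyshift)
      simpa [dist_eq_norm] using this
    · -- F ystar = 0
      have hFy : Tendsto (fun k => F (y k)) atTop (nhds (F ystar)) :=
        (hF.continuous.tendsto ystar).comp hy
      have hB0 : 0 ≤ B := le_trans (norm_nonneg _) (hB 0)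
      have hnorm : ∀ k, ‖F (y k)‖ ≤ B * (‖Δ 0‖ * κ ^ k) := by
        intro k
        have h1 : ‖F (y k)‖ = ‖(J k) (Δ k)‖ := by rw [hJΔ k, norm_neg]
        have h2 : ‖(J k) (Δ k)‖ ≤ B * ‖Δ k‖ :=
          le_trans (((J k : EuclideanSpace ℝ (Fin d) →L[ℝ] EuclideanSpace ℝ (Fin d))).le_opNorm
            (Δ k)) (mul_le_mul_of_nonneg_right (hB k) (norm_nonneg _))
        have h3 : ‖Δ k‖ ≤ ‖Δ 0‖ * κ ^ k := by simpa using hgeo 0 k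
        calc ‖F (y k)‖ ≤ B * ‖Δ k‖ := h1 ▸ h2
          _ ≤ B * (‖Δ 0‖ * κ ^ k) := mul_le_mul_of_nonneg_left h3 hB0
      have hzero : Tendsto (fun k => F (y k)) atTop (nhds 0) := by
        apply squeeze_zero_norm hnorm
        have : Tendsto (fun k : ℕ => κ ^ k) atTop (nhds 0) :=
          tendsto_pow_atTop_nhds_zero_of_lt_one hκ0 hκ
        simpa using (this.const_mul (B * ‖Δ 0‖)).congr (by intro n; ring)
      exact tendsto_nhds_unique hFy hzero
  · -- degenerate case: κ < 0 forces all steps to vanish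
    have hΔ0 : ∀ k, Δ k = 0 := by
      intro k
      have h := hcond k 0 ⟨le_refl 0, zero_le_one⟩
      have h0 : (0:ℝ) ≤ κ * ‖Δ k‖ := le_trans (norm_nonneg _) h
      by_contra hne
      have : 0 < ‖Δ k‖ := norm_pos_iff.mpr hne
      nlinarith
    have hconst : ∀ k, y k = y 0 := by
      intro k
      induction k with
      | zero => rfl
      | succ n ih => rw [hyk1 n, hΔ0 n, add_zero, ih]
    refine ⟨y 0, ?_, ?_, ?_⟩
    · exact tendsto_const_nhds.congr (fun k => (hconst k).symm)
    · intro k; rw [hconst k, hΔ0 k]; simp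
    · have h := hΔ0 0
      rw [hΔ 0, hrec 0] at h
      have : (J 0).symm (F (y 0)) = 0 := by
        have := h; rw [sub_sub_cancel_left] at this
        simpa using this
      have := congrArg (J 0) this
      simpa using this
end

section
/- (Dennis–Moré-type superlinear convergence, underlying Theorem 2.) Let F : ℝᵈ → ℝᵈ be continuously differentiable, let y* ∈ ℝᵈ satisfy F(y*) = 0 with DF(y*) invertible, and let (Jᵏ)ₖ be invertible d×d real matrices generating iterates y^{k+1} = y^k − (Jᵏ)⁻¹F(y^k) with steps Δy^k = y^{k+1} − y^k ≠ 0 and y^k ≠ y* for all k. If y^k → y* and the Dennis–Moré condition holds, lim_{k→∞} ‖(Jᵏ − DF(y*)) Δy^k‖/‖Δy^k‖ = 0, then the convergence is q-superlinear: lim_{k→∞} ‖y^{k+1} − y*‖/‖y^k − y*‖ = 0. -/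
open Filter

/-- Dennis–Moré-type characterization of q-superlinear convergence for
Newton-type iterations `y⁺ = y − (Jᵏ)⁻¹F(y)`. -/
theorem dennis_more_superlinear {d : ℕ}
    (F : EuclideanSpace ℝ (Fin d) → EuclideanSpace ℝ (Fin d))
    (hF : ContDiff ℝ 1 F)
    (ystar : EuclideanSpace ℝ (Fin d)) (hFy : F ystar = 0)
    (D : EuclideanSpace ℝ (Fin d) ≃L[ℝ] EuclideanSpace ℝ (Fin d))
    (hD : (D : EuclideanSpace ℝ (Fin d) →L[ℝ] EuclideanSpace ℝ (Fin d)) = fderiv ℝ F ystar)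
    (J : ℕ → (EuclideanSpace ℝ (Fin d) ≃L[ℝ] EuclideanSpace ℝ (Fin d)))
    (y : ℕ → EuclideanSpace ℝ (Fin d))
    (hrec : ∀ k, y (k + 1) = y k - (J k).symm (F (y k)))
    (Δ : ℕ → EuclideanSpace ℝ (Fin d)) (hΔ : ∀ k, Δ k = y (k + 1) - y k)
    (hΔne : ∀ k, Δ k ≠ 0) (hyne : ∀ k, y k ≠ ystar)
    (hconv : Tendsto y atTop (nhds ystar))
    (hDM : Tendsto (fun k => ‖J k (Δ k) - fderiv ℝ F ystar (Δ k)‖ / ‖Δ k‖) atTop (nhds 0)) :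
    Tendsto (fun k => ‖y (k + 1) - ystar‖ / ‖y k - ystar‖) atTop (nhds 0) := by
  have hD' : HasFDerivAt F (D : EuclideanSpace ℝ (Fin d) →L[ℝ] EuclideanSpace ℝ (Fin d)) ystar := by
    rw [hD]; exact (hF.differentiable one_ne_zero ystar).hasFDerivAt
  set g : ℕ → EuclideanSpace ℝ (Fin d) := fun k => F (y k) - D (y k - ystar) with hg
  have hecv : Tendsto (fun k => y k - ystar) atTop (nhds 0) := by
    simpa using hconv.sub (tendsto_const_nhds (x := ystar))
  have hlo : (fun k => g k) =o[atTop] fun k => y k - ystar := by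
    have h1 := hD'.isLittleO
    have h2 := h1.comp_tendsto hconv
    simpa [hg, hFy, Function.comp_def] using h2
  have hδ : Tendsto (fun k => ‖g k‖ / ‖y k - ystar‖) atTop (nhds 0) :=
    hlo.norm_norm.tendsto_div_nhds_zero
  have hkey : ∀ k, D (y (k+1) - ystar) = (D (Δ k) - J k (Δ k)) - g k := by
    intro k
    have hJ : J k (Δ k) = -(F (y k)) := by
      rw [hΔ, hrec]; simp
    have h3 : y (k+1) - ystar = Δ k + (y k - ystar) := by rw [hΔ]; abel
    rw [h3, map_add, hJ, hg]
    beta_reduce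
    abel
  set C := ‖((D.symm : EuclideanSpace ℝ (Fin d) ≃L[ℝ] EuclideanSpace ℝ (Fin d)) :
      EuclideanSpace ℝ (Fin d) →L[ℝ] EuclideanSpace ℝ (Fin d))‖ with hC
  have hC0 : 0 ≤ C := norm_nonneg _
  have hbound : ∀ k, ‖y (k+1) - ystar‖ ≤ C * (‖J k (Δ k) - D (Δ k)‖ + ‖g k‖) := by
    intro k
    calc ‖y (k+1) - ystar‖ = ‖D.symm (D (y (k+1) - ystar))‖ := by simp
    _ ≤ C * ‖D (y (k+1) - ystar)‖ := by
        have h := (D.symm : EuclideanSpace ℝ (Fin d) →L[ℝ]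
          EuclideanSpace ℝ (Fin d)).le_opNorm (D (y (k+1) - ystar))
        exact h
    _ ≤ C * (‖J k (Δ k) - D (Δ k)‖ + ‖g k‖) := by
        apply mul_le_mul_of_nonneg_left _ hC0
        rw [hkey k]
        calc ‖D (Δ k) - J k (Δ k) - g k‖ ≤ ‖D (Δ k) - J k (Δ k)‖ + ‖g k‖ := norm_sub_le _ _
        _ = ‖J k (Δ k) - D (Δ k)‖ + ‖g k‖ := by rw [norm_sub_rev]
  set ε : ℕ → ℝ := fun k => ‖J k (Δ k) - D (Δ k)‖ / ‖Δ k‖ with hε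
  have hεDM : Tendsto ε atTop (nhds 0) := by
    simpa [hε, ← hD] using hDM
  have hεnn : ∀ k, 0 ≤ ε k := fun k => div_nonneg (norm_nonneg _) (norm_nonneg _)
  have hδnn : ∀ k, 0 ≤ ‖g k‖ / ‖y k - ystar‖ :=
    fun k => div_nonneg (norm_nonneg _) (norm_nonneg _)
  -- eventually C * ε k ≤ 1/2
  have hev : ∀ᶠ k in atTop, C * ε k ≤ 1/2 := by
    have : ∀ᶠ k in atTop, ε k < 1/(2*(C+1)) := by
      have := hεDM (Iio_mem_nhds (show (0:ℝ) < 1/(2*(C+1)) by positivity))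
      simpa using this
    filter_upwards [this] with k hk
    have h1 : C * ε k ≤ (C+1) * (1/(2*(C+1))) := by
      apply mul_le_mul (by linarith) hk.le (hεnn k) (by linarith)
    have h2 : (C+1) * (1/(2*(C+1))) = 1/2 := by
      field_simp
    linarith [h1, h2 ▸ h1]
  apply squeeze_zero' (g := fun k => 2*C*(ε k + ‖g k‖ / ‖y k - ystar‖))
  · exact Eventually.of_forall fun k => div_nonneg (norm_nonneg _) (norm_nonneg _)
  · filter_upwards [hev] with k hk
    have ha : 0 < ‖y k - ystar‖ := by
      rw [norm_pos_iff]
      exact sub_ne_zero_of_ne (hyne k)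
    have hΔpos : 0 < ‖Δ k‖ := by rw [norm_pos_iff]; exact hΔne k
    have hεeq : ‖J k (Δ k) - D (Δ k)‖ = ε k * ‖Δ k‖ := by
      rw [hε]; field_simp
    have hgeq : ‖g k‖ = (‖g k‖ / ‖y k - ystar‖) * ‖y k - ystar‖ := by
      field_simp
    have hΔle : ‖Δ k‖ ≤ ‖y (k+1) - ystar‖ + ‖y k - ystar‖ := by
      have : Δ k = (y (k+1) - ystar) - (y k - ystar) := by rw [hΔ]; abel
      rw [this]; exact norm_sub_le _ _
    have hb := hbound k
    set a := ‖y k - ystar‖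
    set b := ‖y (k+1) - ystar‖
    set δk := ‖g k‖ / ‖y k - ystar‖
    have hbnn : 0 ≤ b := norm_nonneg _
    have hεk := hεnn k
    have hδk : 0 ≤ δk := hδnn k
    rw [div_le_iff₀ ha]
    -- b ≤ C*(ε*‖Δ‖ + δ*a), ‖Δ‖ ≤ b + a, C*ε ≤ 1/2
    have h4 : b ≤ C * (ε k * (b + a) + δk * a) := by
      calc b ≤ C * (‖J k (Δ k) - D (Δ k)‖ + ‖g k‖) := hb
      _ = C * (ε k * ‖Δ k‖ + δk * a) := by rw [hεeq, ← hgeq]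
      _ ≤ C * (ε k * (b + a) + δk * a) := by
          apply mul_le_mul_of_nonneg_left _ hC0
          have := mul_le_mul_of_nonneg_left hΔle hεk
          linarith
    nlinarith [mul_nonneg (mul_nonneg hC0 hεk) hbnn]
  · have : Tendsto (fun k => ε k + ‖g k‖ / ‖y k - ystar‖) atTop (nhds 0) := by
      simpa using hεDM.add hδ
    simpa using this.const_mul (2*C)
end

section
/- (Rank-one update of the condensed Jacobian for lifted collocation.) Let C be an invertible real q×q matrix, D a real q×n matrix, and set E = C⁻¹D. Let ρ, τ_C ∈ ℝ^q, τ_D ∈ ℝⁿ, and α ∈ ℝ satisfy 1 + α τ_Cᵀ C⁻¹ ρ ≠ 0; set β = 1/(1 + α τ_Cᵀ C⁻¹ ρ) and ρ̃ = C⁻¹ρ. Define the updated matrices C⁺ = C + α ρ τ_Cᵀ and D⁺ = D + α ρ τ_Dᵀ. Then: (i) C⁺ is invertible with (C⁺)⁻¹ = C⁻¹ − α β ρ̃ τ_Cᵀ C⁻¹ (Sherman–Morrison), and (ii) the condensed product obeys the rank-one update (C⁺)⁻¹ D⁺ = E + α ρ̃ τ̃ᵀ, where τ̃ᵀ = τ_Dᵀ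 − β τ_Cᵀ (E + α ρ̃ τ_Dᵀ). -/
open scoped Matrix

section Helpers

set_option linter.unusedSectionVars false

variable {m p r : Type*} [Fintype m] [Fintype p]

lemma mul_vecMulVec_aux (M : Matrix r m ℝ) (a : m → ℝ) (b : p → ℝ) :
    M * Matrix.vecMulVec a b = Matrix.vecMulVec (M *ᵥ a) b := by
  ext i j
  simp [Matrix.mul_apply, Matrix.vecMulVec_apply, Matrix.mulVec, dotProduct,
    Finset.sum_mul, mul_assoc]

lemma vecMulVec_mul_aux (a : r → ℝ) (b : m → ℝ) (M : Matrix m p ℝ) :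
    Matrix.vecMulVec a b * M = Matrix.vecMulVec a (b ᵥ* M) := by
  ext i j
  simp [Matrix.mul_apply, Matrix.vecMulVec_apply, Matrix.vecMul, dotProduct,
    Finset.mul_sum, mul_assoc]

lemma vecMulVec_mul_vecMulVec_aux (a : r → ℝ) (b : m → ℝ) (c : m → ℝ) (d : p → ℝ) :
    Matrix.vecMulVec a b * Matrix.vecMulVec c d = (b ⬝ᵥ c) • Matrix.vecMulVec a d := by
  ext i j
  simp only [Matrix.mul_apply, Matrix.vecMulVec_apply, Matrix.smul_apply, dotProduct,
    Finset.sum_mul, smul_eq_mul]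
  exact Finset.sum_congr rfl fun x _ => by ring

lemma vecMul_vecMulVec_aux (t : m → ℝ) (a : m → ℝ) (b : p → ℝ) :
    t ᵥ* Matrix.vecMulVec a b = (t ⬝ᵥ a) • b := by
  ext j
  simp [Matrix.vecMul, Matrix.vecMulVec_apply, dotProduct, Finset.sum_mul, mul_assoc]

lemma vecMulVec_lin_aux (a : r → ℝ) (b b' : p → ℝ) (c : ℝ) :
    Matrix.vecMulVec a (b - c • b') =
      Matrix.vecMulVec a b - c • Matrix.vecMulVec a b' := by
  ext i j
  simp [Matrix.vecMulVec_apply]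
  ring

end Helpers

/-- Sherman–Morrison inverse update and the induced rank-one update of the
condensed Jacobian `E = C⁻¹D` for the block-TR1 update of `[D C]` in lifted collocation. -/
theorem lifted_collocation_rank_one_update {q n : ℕ}
    (C : Matrix (Fin q) (Fin q) ℝ) (hC : IsUnit C)
    (D : Matrix (Fin q) (Fin n) ℝ)
    (E : Matrix (Fin q) (Fin n) ℝ) (hE : E = C⁻¹ * D)
    (ρ τC : Fin q → ℝ) (τD : Fin n → ℝ) (α : ℝ)
    (hden : 1 + α * (τC ⬝ᵥ (C⁻¹ *ᵥ ρ)) ≠ 0)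
    (β : ℝ) (hβ : β = 1 / (1 + α * (τC ⬝ᵥ (C⁻¹ *ᵥ ρ))))
    (ρt : Fin q → ℝ) (hρt : ρt = C⁻¹ *ᵥ ρ)
    (Cp : Matrix (Fin q) (Fin q) ℝ) (hCp : Cp = C + α • Matrix.vecMulVec ρ τC)
    (Dp : Matrix (Fin q) (Fin n) ℝ) (hDp : Dp = D + α • Matrix.vecMulVec ρ τD)
    (τt : Fin n → ℝ)
    (hτt : τt = τD - β • (τC ᵥ* (E + α • Matrix.vecMulVec ρt τD))) :
    IsUnit Cp ∧
    Cp⁻¹ = C⁻¹ - (α * β) • Matrix.vecMulVec ρt (τC ᵥ* C⁻¹) ∧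
    Cp⁻¹ * Dp = E + α • Matrix.vecMulVec ρt τt := by
  have hCd : IsUnit C.det := (Matrix.isUnit_iff_isUnit_det C).mp hC
  have hCinv : C * C⁻¹ = 1 := Matrix.mul_nonsing_inv C hCd
  have hinvC : C⁻¹ * C = 1 := Matrix.nonsing_inv_mul C hCd
  set k : ℝ := τC ⬝ᵥ (C⁻¹ *ᵥ ρ) with hk
  set s : Fin q → ℝ := τC ᵥ* C⁻¹ with hs
  set B : Matrix (Fin q) (Fin q) ℝ := C⁻¹ - (α * β) • Matrix.vecMulVec ρt s with hB
  have hβk : β * (1 + α * k) = 1 := by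
    rw [hβ]; field_simp
  have hks : s ⬝ᵥ ρ = k := by
    rw [hs, hk, ← Matrix.dotProduct_mulVec]
  have hkt : τC ⬝ᵥ ρt = k := by rw [hρt, hk]
  have hCρt : C *ᵥ ρt = ρ := by
    rw [hρt, Matrix.mulVec_mulVec, hCinv, Matrix.one_mulVec]
  -- Cp * B = 1
  have hCpB : Cp * B = 1 := by
    rw [hCp, hB, add_mul, mul_sub, mul_sub, Matrix.smul_mul, Matrix.smul_mul,
      Matrix.mul_smul, Matrix.mul_smul, hCinv, mul_vecMulVec_aux, hCρt,
      vecMulVec_mul_aux, ← hs, vecMulVec_mul_vecMulVec_aux, hkt]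
    match_scalars <;> first | ring1 | linear_combination (-α) * hβk
  -- B * Cp = 1
  have hBCp : B * Cp = 1 := by
    have hsC : s ᵥ* C = τC := by
      rw [hs, Matrix.vecMul_vecMul, hinvC, Matrix.vecMul_one]
    rw [hCp, hB, sub_mul, mul_add, mul_add, Matrix.smul_mul, Matrix.smul_mul,
      Matrix.mul_smul, Matrix.mul_smul, hinvC, mul_vecMulVec_aux, hρt.symm,
      vecMulVec_mul_aux, hsC, vecMulVec_mul_vecMulVec_aux, hks]
    match_scalars <;> first | ring1 | linear_combination (-α) * hβk
  have hUnit : IsUnit Cp := by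
    apply (Matrix.isUnit_iff_isUnit_det Cp).mpr
    have : Cp.det * B.det = 1 := by rw [← Matrix.det_mul, hCpB, Matrix.det_one]
    exact IsUnit.of_mul_eq_one _ this
  have hInv : Cp⁻¹ = B := Matrix.inv_eq_right_inv hCpB
  refine ⟨hUnit, hInv, ?_⟩
  -- the condensed update
  have hsD : s ᵥ* D = τC ᵥ* E := by
    rw [hs, hE, Matrix.vecMul_vecMul]
  have hτCE : τC ᵥ* (E + α • Matrix.vecMulVec ρt τD) = τC ᵥ* E + (α * k) • τD := by
    rw [Matrix.vecMul_add,
      show α • Matrix.vecMulVec ρt τD = Matrix.vecMulVec ρt (α • τD) from by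
        ext i j; simp [Matrix.vecMulVec_apply]; ring,
      vecMul_vecMulVec_aux, hkt, smul_smul, mul_comm k α]
  rw [hInv, hB, hDp, Matrix.sub_mul, Matrix.mul_add, Matrix.mul_add, Matrix.smul_mul, Matrix.smul_mul,
    Matrix.mul_smul, Matrix.mul_smul, ← hE, mul_vecMulVec_aux, hρt.symm,
    vecMulVec_mul_aux, hsD, vecMulVec_mul_vecMulVec_aux, hks,
    hτt, hτCE]
  rw [show τD - β • (τC ᵥ* E + (α * k) • τD) =
      (1 - β * (α * k)) • τD - β • (τC ᵥ* E) by module]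
  rw [vecMulVec_lin_aux, show Matrix.vecMulVec ρt ((1 - β * (α * k)) • τD) =
      (1 - β * (α * k)) • Matrix.vecMulVec ρt τD by
    ext i j; simp [Matrix.vecMulVec_apply]; ring]
  match_scalars <;> ring
end
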